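/- Assume S has no conjugate points. Then for every r ∈ ℤ^d, the function x ∈ ℝ^d ↦ S(x, x + r) is constant. -/

import Mathlib

noncomputable section

/-- Configuration space `ℝ^d` with the Euclidean norm. -/
abbrev Ed (d : ℕ) := EuclideanSpace ℝ (Fin d)

/-- The point of `ℝ^d` with integer coordinates given by `r ∈ ℤ^d`. -/
def intVec (d : ℕ) (r : Fin d → ℤ) : Ed d := WithLp.toLp 2 (fun i => (r i : ℝ))

/-- A generating function: a `C²` map `S : ℝ^d × ℝ^d → ℝ` which is `ℤ^d`-periodic for
the diagonal action and satisfies the uniform twist condition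
`∑_{i,j} ∂²S/∂xᵢ∂yⱼ (x,y) ξᵢ ξⱼ ≤ -A‖ξ‖²` (expressed via the second derivative of `S`
applied to `((ξ,0),(0,ξ))`). -/
def IsGenFn {d : ℕ} (S : Ed d × Ed d → ℝ) : Prop :=
  ContDiff ℝ 2 S ∧
  (∀ (r : Fin d → ℤ) (x y : Ed d), S (x + intVec d r, y + intVec d r) = S (x, y)) ∧
  ∃ A : ℝ, 0 < A ∧ ∀ (x y ξ : Ed d),
    iteratedFDeriv ℝ 2 S (x, y) ![(ξ, 0), (0, ξ)] ≤ -A * ‖ξ‖ ^ 2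

/-- `∂₁S`, the partial differential of `S` with respect to its first variable. -/
def D1 {d : ℕ} (S : Ed d × Ed d → ℝ) (x y : Ed d) : Ed d →L[ℝ] ℝ :=
  fderiv ℝ (fun z => S (z, y)) x

/-- `∂₂S`, the partial differential of `S` with respect to its second variable. -/
def D2 {d : ℕ} (S : Ed d × Ed d → ℝ) (x y : Ed d) : Ed d →L[ℝ] ℝ :=
  fderiv ℝ (fun z => S (x, z)) y

/-- A bi-infinite sequence `(x_n)_{n∈ℤ}` is extremal if
`∂₂S(x_{n-1}, x_n) + ∂₁S(x_n, x_{n+1}) = 0` for every `n`. -/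
def IsExtremal {d : ℕ} (S : Ed d × Ed d → ℝ) (u : ℤ → Ed d) : Prop :=
  ∀ n : ℤ, D2 S (u (n - 1)) (u n) + D1 S (u n) (u (n + 1)) = 0

/-- The action `S(x_0, …, x_n)` of a finite sequence. -/
def act {d : ℕ} (S : Ed d × Ed d → ℝ) (n : ℕ) (γ : ℕ → Ed d) : ℝ :=
  ∑ k ∈ Finset.range n, S (γ k, γ (k + 1))

/-- The sequence `(x, z_1, …, z_{N-1}, y)` built from interior points `z`. -/
def path {d : ℕ} (x y : Ed d) (N : ℕ) (z : Fin (N - 1) → Ed d) : ℕ → Ed d :=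
  fun k => if h0 : k = 0 then x else if h : k < N then z ⟨k - 1, by omega⟩ else y

/-- The fixed-endpoint action `S_{x,y,N} : (x_1, …, x_{N-1}) ↦ S(x, x_1, …, x_{N-1}, y)`. -/
def fixedAct {d : ℕ} (S : Ed d × Ed d → ℝ) (x y : Ed d) (N : ℕ) :
    (Fin (N - 1) → Ed d) → ℝ :=
  fun z => act S N (path x y N z)

/-- `S` has no conjugate points: for all `x, y` and `N ≥ 2`, the fixed-endpoint action
`S_{x,y,N}` has exactly one critical point, and attains its global minimum there. -/
def NoConjPts {d : ℕ} (S : Ed d × Ed d → ℝ) : Prop :=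
  ∀ (x y : Ed d) (N : ℕ), 2 ≤ N →
    ∃ z : Fin (N - 1) → Ed d,
      fderiv ℝ (fixedAct S x y N) z = 0 ∧
      (∀ w, fixedAct S x y N z ≤ fixedAct S x y N w) ∧
      (∀ z', fderiv ℝ (fixedAct S x y N) z' = 0 → z' = z)

/-- `A_N(x,y)`: the minimum of the fixed-endpoint action `S_{x,y,N}` for `N ≥ 2`,
and `S(x,y)` for `N = 1`. -/
def AN {d : ℕ} (S : Ed d × Ed d → ℝ) (N : ℕ) (x y : Ed d) : ℝ :=
  if N ≤ 1 then S (x, y) else sInf (Set.range (fixedAct S x y N))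

/-- The minimizing holonomic value `Σ̃(S)`. -/
def holVal {d : ℕ} (S : Ed d × Ed d → ℝ) : ℝ :=
  sInf { v : ℝ | ∃ n : ℕ, 1 ≤ n ∧ ∃ γ : ℕ → Ed d,
    (∃ r : Fin d → ℤ, γ n - γ 0 = intVec d r) ∧ v = act S n γ / n }

/-- The normalized action `S̃(x_0, …, x_n) = S(x_0, …, x_n) - n Σ̃(S)`. -/
def actTilde {d : ℕ} (S : Ed d × Ed d → ℝ) (n : ℕ) (γ : ℕ → Ed d) : ℝ :=
  act S n γ - n * holVal S

/-- The Mañé potential `π(x,y)`. -/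
def manePot {d : ℕ} (S : Ed d × Ed d → ℝ) (x y : Ed d) : ℝ :=
  sInf { v : ℝ | ∃ n : ℕ, 1 ≤ n ∧ ∃ γ : ℕ → Ed d,
    γ 0 = x ∧ (∃ r : Fin d → ℤ, γ n - y = intVec d r) ∧ v = actTilde S n γ }

/-- The Aubry set `Ā(S) ⊂ ℝ^d × ℝ^d`. -/
def aubry {d : ℕ} (S : Ed d × Ed d → ℝ) : Set (Ed d × Ed d) :=
  { p | ∀ ε > 0, ∃ n : ℕ, 1 ≤ n ∧ ∃ γ : ℕ → Ed d,
      (∃ r : Fin d → ℤ, γ n - γ 0 = intVec d r) ∧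
      ‖p.1 - γ 0‖ < ε ∧ ‖p.2 - γ 1‖ < ε ∧ actTilde S n γ < ε }

/-- The generating function `S_c(x,y) = S(x,y) + c(x - y)` associated to a cohomology
class `c ∈ (ℝ^d)*`. -/
def Sc {d : ℕ} (S : Ed d × Ed d → ℝ) (c : Ed d →L[ℝ] ℝ) : Ed d × Ed d → ℝ :=
  fun p => S p + c (p.1 - p.2)


section Aux

variable {d : ℕ} {S : Ed d × Ed d → ℝ}

lemma hasFDerivAt_of_C2 (hC2 : ContDiff ℝ 2 S) (p : Ed d × Ed d) :
    HasFDerivAt S (fderiv ℝ S p) p :=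
  ((hC2.differentiable (by norm_num)) p).hasFDerivAt

lemma fderiv_translate (hC2 : ContDiff ℝ 2 S)
    (hfun : ∀ q : Ed d × Ed d, S (q + c) = S q) (p : Ed d × Ed d) :
    fderiv ℝ S (p + c) = fderiv ℝ S p := by
  have h1 : HasFDerivAt (fun q => S (q + c)) (fderiv ℝ S (p + c)) p := by
    have h2 := (hasFDerivAt_of_C2 hC2 (p + c)).comp p ((hasFDerivAt_id p).add_const c)
    exact h2
  have h3 : (fun q : Ed d × Ed d => S (q + c)) = S := funext hfun
  rw [h3] at h1
  exact h1.fderiv.symm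

end Aux

/-- If `S` has no conjugate points, then for every `r ∈ ℤ^d` the quantity `S(x, x + r)`
does not depend on `x`. -/
theorem stmt_11 (d : ℕ) (hd : 1 ≤ d) (S : Ed d × Ed d → ℝ) (hS : IsGenFn S)
    (h : NoConjPts S) :
    ∀ (r : Fin d → ℤ) (x x' : Ed d),
      S (x, x + intVec d r) = S (x', x' + intVec d r) := by
  obtain ⟨hC2, hper, -⟩ := hS
  have hdS : ∀ p, HasFDerivAt S (fderiv ℝ S p) p := hasFDerivAt_of_C2 hC2
  intro r x x'
  set ρ : Ed d := intVec d r with hρdef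
  set σ : ℤ → Ed d := fun k => intVec d (fun i => k * r i) with hσdef
  have hσ0 : σ 0 = 0 := by
    ext i; simp [hσdef, intVec]
  have hσ1 : σ 1 = ρ := by
    ext i; simp [hσdef, hρdef, intVec]
  have hσsucc : ∀ k : ℤ, σ (k + 1) = σ k + ρ := by
    intro k; ext i
    simp [hσdef, hρdef, intVec, PiLp.add_apply]
    push_cast; ring
  have hSt : ∀ (k : ℤ) (a b : Ed d), S (a + σ k, b + σ k) = S (a, b) :=
    fun k a b => hper (fun i => k * r i) a b
  have hDt : ∀ (k : ℤ) (p : Ed d × Ed d), fderiv ℝ S (p + (σ k, σ k)) = fderiv ℝ S p := by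
    intro k p
    exact fderiv_translate hC2 (fun q => hSt k q.1 q.2) p
  set g : Ed d → ℝ := fun v => S (v, v + ρ) with hgdef
  have hgper : ∀ (s : Fin d → ℤ) (v : Ed d), g (v + intVec d s) = g v := by
    intro s v
    have h1 := hper s v (v + ρ)
    simpa [hgdef, add_right_comm] using h1
  have hgc : Continuous g :=
    hC2.continuous.comp (continuous_id.prodMk (continuous_id.add continuous_const))
  -- global max
  obtain ⟨xM, -, hmaxK⟩ := (isCompact_closedBall (0 : Ed d) d).exists_isMaxOn
    ⟨0, Metric.mem_closedBall_self (by positivity)⟩ hgc.continuousOn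
  have hxM : ∀ v, g v ≤ g xM := by
    intro v
    set s : Fin d → ℤ := fun i => ⌊v i⌋ with hsdef
    have hmem : v - intVec d s ∈ Metric.closedBall (0 : Ed d) d := by
      rw [Metric.mem_closedBall, dist_zero_right]
      have hb : ∀ i, ‖(v - intVec d s) i‖ ^ 2 ≤ 1 := by
        intro i
        have h1 : (v - intVec d s) i = v i - (⌊v i⌋ : ℝ) := by simp only [intVec, PiLp.sub_apply, hsdef]
        rw [h1, Real.norm_eq_abs, sq_abs]
        nlinarith [Int.floor_le (v i), Int.lt_floor_add_one (v i), Int.sub_one_lt_floor (v i)]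
      have h2 : ∑ i, ‖(v - intVec d s) i‖ ^ 2 ≤ (d : ℝ) ^ 2 := by
        calc ∑ i, ‖(v - intVec d s) i‖ ^ 2 ≤ ∑ _i : Fin d, (1 : ℝ) :=
              Finset.sum_le_sum (fun i _ => hb i)
          _ = (d : ℝ) := by simp
          _ ≤ (d : ℝ) ^ 2 := by
              have h1d : (1:ℝ) ≤ d := by exact_mod_cast hd
              nlinarith
      rw [EuclideanSpace.norm_eq]
      calc Real.sqrt (∑ i, ‖(v - intVec d s) i‖ ^ 2) ≤ Real.sqrt ((d : ℝ) ^ 2) :=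
            Real.sqrt_le_sqrt h2
        _ = d := Real.sqrt_sq (by positivity)
    have h3 : g v = g (v - intVec d s) := by
      have h4 := hgper s (v - intVec d s)
      rw [sub_add_cancel] at h4
      exact h4
    rw [h3]
    exact hmaxK hmem
  have hcrit : fderiv ℝ g xM = 0 :=
    ((isMaxOn_univ_iff.mpr hxM).isLocalMax Filter.univ_mem).fderiv_eq_zero
  set L : Ed d × Ed d →L[ℝ] ℝ := fderiv ℝ S (xM, xM + ρ) with hLdef
  have hgd : HasFDerivAt g (L.comp ((ContinuousLinearMap.id ℝ (Ed d)).prod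
      (ContinuousLinearMap.id ℝ (Ed d)))) xM :=
    (hdS (xM, xM + ρ)).comp xM (HasFDerivAt.prodMk (hasFDerivAt_id xM) ((hasFDerivAt_id xM).add_const ρ))
  have h0 : ∀ ξ : Ed d, L (ξ, ξ) = 0 := by
    intro ξ
    have e1 := hgd.fderiv
    rw [hcrit] at e1
    have e2 := congrArg (fun T : Ed d →L[ℝ] ℝ => T ξ) e1
    simpa using e2.symm
  -- key inequality: the max value is ≤ every value
  have key : ∀ w : Ed d, g xM ≤ g w := by
    intro w
    have keyN : ∀ M : ℕ,
        ((M : ℝ) + 2) * g xM ≤ (M : ℝ) * g w + (S (xM, w + ρ) + S (w, xM + ρ)) := by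
      intro M
      set y : Ed d := xM + σ ((M + 2 : ℕ) : ℤ) with hydef
      set P : ℕ → ((Fin (M + 1) → Ed d) →L[ℝ] Ed d) :=
        fun k => if hk : 0 < k ∧ k < M + 2 then
          ContinuousLinearMap.proj (⟨k - 1, by omega⟩ : Fin (M + 1)) else 0 with hPdef
      set cc : ℕ → Ed d := fun k => if k = 0 then xM else if k < M + 2 then 0 else y with hccdef
      have hpe : ∀ (z : Fin (M + 1) → Ed d) (k : ℕ),
          path xM y (M + 2) z k = P k z + cc k := by
        intro z k
        rcases Nat.eq_zero_or_pos k with h0' | h0'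
        · subst h0'
          have e1 : P 0 = 0 := by simp only [hPdef]; exact dif_neg (by omega)
          have e2 : cc 0 = xM := by simp [hccdef]
          rw [e1, e2]
          simp [path]
        · by_cases hlt : k < M + 2
          · have e1 : P k = ContinuousLinearMap.proj (⟨k - 1, by omega⟩ : Fin (M + 1)) := by
              simp only [hPdef]; exact dif_pos ⟨h0', hlt⟩
            have e2 : cc k = 0 := by
              have hk0 : ¬ k = 0 := by omega
              simp [hccdef, hk0, hlt]
            rw [e1, e2]
            simp only [path]
            rw [dif_neg (by omega), dif_pos hlt]
            simp [ContinuousLinearMap.proj_apply]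
          · have e1 : P k = 0 := by simp only [hPdef]; exact dif_neg (by omega)
            have e2 : cc k = y := by
              have hk0 : ¬ k = 0 := by omega
              simp [hccdef, hk0, hlt]
            rw [e1, e2]
            simp only [path]
            rw [dif_neg (by omega), dif_neg hlt]
            simp
      set zst : Fin (M + 1) → Ed d := fun j => xM + σ ((j.val + 1 : ℕ) : ℤ) with hzdef
      have hpathz : ∀ k, k ≤ M + 2 → path xM y (M + 2) zst k = xM + σ (k : ℤ) := by
        intro k hk
        simp only [path]
        split_ifs with h0' hlt
        · subst h0'
          rw [show ((0 : ℕ) : ℤ) = 0 from rfl, hσ0, add_zero]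
        · simp only [hzdef]
          congr 2
          rw [show ((k - 1 + 1 : ℕ) : ℤ) = (k : ℤ) by omega]
        · have hkN : k = M + 2 := by omega
          subst hkN
          rfl
      have hvalz : fixedAct S xM y (M + 2) zst = ((M : ℝ) + 2) * g xM := by
        have hterm : ∀ k ∈ Finset.range (M + 2),
            S (path xM y (M + 2) zst k, path xM y (M + 2) zst (k + 1)) = g xM := by
          intro k hk
          rw [Finset.mem_range] at hk
          rw [hpathz k hk.le, hpathz (k + 1) (by omega)]
          have e : xM + σ ((k + 1 : ℕ) : ℤ) = (xM + ρ) + σ (k : ℤ) := by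
            push_cast
            rw [hσsucc]
            abel
          rw [e]
          exact hSt k xM (xM + ρ)
        show (∑ k ∈ Finset.range (M + 2),
            S (path xM y (M + 2) zst k, path xM y (M + 2) zst (k + 1))) = _
        rw [Finset.sum_congr rfl hterm, Finset.sum_const, Finset.card_range, nsmul_eq_mul]
        push_cast
        ring
      have hLk : ∀ k ∈ Finset.range (M + 2),
          fderiv ℝ S (path xM y (M + 2) zst k, path xM y (M + 2) zst (k + 1)) = L := by
        intro k hk
        rw [Finset.mem_range] at hk
        rw [hpathz k hk.le, hpathz (k + 1) (by omega)]
        have e2 : xM + σ ((k + 1 : ℕ) : ℤ) = (xM + ρ) + σ (k : ℤ) := by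
          push_cast
          rw [hσsucc]
          abel
        rw [e2]
        exact hDt (k : ℤ) (xM, xM + ρ)
      have hcritz : fderiv ℝ (fixedAct S xM y (M + 2)) zst = 0 := by
        have hterm : ∀ k ∈ Finset.range (M + 2),
            HasFDerivAt (fun z => S (path xM y (M + 2) z k, path xM y (M + 2) z (k + 1)))
              (L.comp ((P k).prod (P (k + 1)))) zst := by
          intro k hk
          have h1 := (hdS (((P k).prod (P (k + 1))) zst + (cc k, cc (k + 1)))).comp zst
            ((((P k).prod (P (k + 1))).hasFDerivAt).add_const (cc k, cc (k + 1)))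
          have hpt : ((P k).prod (P (k + 1))) zst + (cc k, cc (k + 1))
              = (path xM y (M + 2) zst k, path xM y (M + 2) zst (k + 1)) := by
            rw [hpe zst k, hpe zst (k + 1)]
            rfl
          rw [hpt, hLk k hk] at h1
          have hfun : ∀ z : Fin (M + 1) → Ed d,
              S (path xM y (M + 2) z k, path xM y (M + 2) z (k + 1))
              = (S ∘ fun zz => ((P k).prod (P (k + 1))) zz + (cc k, cc (k + 1))) z := by
            intro z
            show S (path xM y (M + 2) z k, path xM y (M + 2) z (k + 1))
              = S (((P k).prod (P (k + 1))) z + (cc k, cc (k + 1)))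
            rw [hpe z k, hpe z (k + 1)]
            rfl
          exact h1.congr_of_eventuallyEq (Filter.Eventually.of_forall hfun)
        have htot : HasFDerivAt (fixedAct S xM y (M + 2))
            (∑ k ∈ Finset.range (M + 2), L.comp ((P k).prod (P (k + 1)))) zst :=
          HasFDerivAt.fun_sum hterm
        rw [htot.fderiv]
        ext v
        simp only [ContinuousLinearMap.sum_apply, ContinuousLinearMap.comp_apply,
          ContinuousLinearMap.prod_apply, ContinuousLinearMap.zero_apply]
        have hsplit : ∀ k : ℕ, L ((P k) v, (P (k + 1)) v)
            = L ((P k) v, 0) + L (0, (P (k + 1)) v) := by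
          intro k
          rw [← map_add]
          congr 1
          simp
        have hP0 : P 0 = 0 := by
          simp only [hPdef]
          exact dif_neg (by omega)
        have hPN : P (M + 2) = 0 := by
          simp only [hPdef]
          exact dif_neg (by omega)
        have hshift : (∑ k ∈ Finset.range (M + 2), (P (k + 1)) v)
            = ∑ k ∈ Finset.range (M + 2), (P k) v := by
          have h1 := Finset.sum_range_succ' (fun k => (P k) v) (M + 2)
          have h2 := Finset.sum_range_succ (fun k => (P k) v) (M + 2)
          rw [hP0] at h1
          rw [hPN] at h2
          simp only [ContinuousLinearMap.zero_apply, add_zero] at h1 h2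
          rw [← h1, h2]
        have hA : (∑ k ∈ Finset.range (M + 2), L ((P k) v, 0))
            = L (∑ k ∈ Finset.range (M + 2), (P k) v, 0) := by
          rw [← map_sum]
          congr 1
          rw [Prod.ext_iff]
          refine ⟨?_, ?_⟩
          · simp [Prod.fst_sum]
          · simp [Prod.snd_sum]
        have hB : (∑ k ∈ Finset.range (M + 2), L (0, (P (k + 1)) v))
            = L (0, ∑ k ∈ Finset.range (M + 2), (P (k + 1)) v) := by
          rw [← map_sum]
          congr 1
          rw [Prod.ext_iff]
          refine ⟨?_, ?_⟩
          · simp [Prod.fst_sum]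
          · simp [Prod.snd_sum]
        calc ∑ k ∈ Finset.range (M + 2), L ((P k) v, (P (k + 1)) v)
            = ∑ k ∈ Finset.range (M + 2), (L ((P k) v, 0) + L (0, (P (k + 1)) v)) :=
              Finset.sum_congr rfl (fun k _ => hsplit k)
          _ = (∑ k ∈ Finset.range (M + 2), L ((P k) v, 0))
              + ∑ k ∈ Finset.range (M + 2), L (0, (P (k + 1)) v) := Finset.sum_add_distrib
          _ = 0 := by
              rw [hA, hB, hshift, ← map_add]
              have he : ((∑ k ∈ Finset.range (M + 2), (P k) v, 0)
                  + ((0 : Ed d), ∑ k ∈ Finset.range (M + 2), (P k) v) : Ed d × Ed d)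
                  = (∑ k ∈ Finset.range (M + 2), (P k) v,
                     ∑ k ∈ Finset.range (M + 2), (P k) v) := by
                simp
              rw [he]
              exact h0 _
      obtain ⟨z₀, -, hmin, huniq⟩ := h xM y (M + 2) (by omega)
      have hminz : fixedAct S xM y (M + 2) zst ≤ fixedAct S xM y (M + 2)
          (fun j : Fin (M + 1) => w + σ ((j.val + 1 : ℕ) : ℤ)) := by
        rw [huniq zst hcritz]
        exact hmin _
      set wp : Fin (M + 1) → Ed d := fun j => w + σ ((j.val + 1 : ℕ) : ℤ) with hwpdef
      have hpathw : ∀ k, 1 ≤ k → k < M + 2 → path xM y (M + 2) wp k = w + σ (k : ℤ) := by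
        intro k h1k hkN
        simp only [path]
        rw [dif_neg (by omega), dif_pos hkN]
        simp only [hwpdef]
        congr 2
        rw [show ((k - 1 + 1 : ℕ) : ℤ) = (k : ℤ) by omega]
      have hvalw : fixedAct S xM y (M + 2) wp
          = S (xM, w + ρ) + (M : ℝ) * g w + S (w, xM + ρ) := by
        show (∑ k ∈ Finset.range (M + 2),
            S (path xM y (M + 2) wp k, path xM y (M + 2) wp (k + 1))) = _
        rw [Finset.sum_range_succ, Finset.sum_range_succ']
        have hmid : ∀ k ∈ Finset.range M,
            S (path xM y (M + 2) wp (k + 1), path xM y (M + 2) wp (k + 1 + 1)) = g w := by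
          intro k hk
          rw [Finset.mem_range] at hk
          rw [hpathw (k + 1) (by omega) (by omega), hpathw (k + 2) (by omega) (by omega)]
          have e : w + σ ((k + 2 : ℕ) : ℤ) = (w + ρ) + σ ((k + 1 : ℕ) : ℤ) := by
            have e1 : ((k + 2 : ℕ) : ℤ) = ((k + 1 : ℕ) : ℤ) + 1 := by push_cast; ring
            rw [e1, hσsucc]
            abel
          rw [e]
          exact hSt ((k + 1 : ℕ) : ℤ) w (w + ρ)
        have hf0 : S (path xM y (M + 2) wp 0, path xM y (M + 2) wp (0 + 1)) = S (xM, w + ρ) := by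
          have hp0 : path xM y (M + 2) wp 0 = xM := by
            simp [path]
          rw [hp0, hpathw 1 (by omega) (by omega), show ((1 : ℕ) : ℤ) = 1 from rfl, hσ1]
        have hfl : S (path xM y (M + 2) wp (M + 1), path xM y (M + 2) wp (M + 1 + 1))
            = S (w, xM + ρ) := by
          have hpl : path xM y (M + 2) wp (M + 1 + 1) = xM + σ ((M + 2 : ℕ) : ℤ) := by
            simp only [path]
            rw [dif_neg (by omega), dif_neg (by omega)]
          rw [hpl, hpathw (M + 1) (by omega) (by omega)]
          have e : xM + σ ((M + 2 : ℕ) : ℤ) = (xM + ρ) + σ ((M + 1 : ℕ) : ℤ) := by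
            have e1 : ((M + 2 : ℕ) : ℤ) = ((M + 1 : ℕ) : ℤ) + 1 := by push_cast; ring
            rw [e1, hσsucc]
            abel
          rw [e]
          exact hSt ((M + 1 : ℕ) : ℤ) w (xM + ρ)
        rw [Finset.sum_congr rfl hmid, Finset.sum_const, Finset.card_range, nsmul_eq_mul,
          hf0, hfl]
        ring
      rw [hvalz, hvalw] at hminz
      linarith
    by_contra hlt
    push_neg at hlt
    obtain ⟨M, hM⟩ := exists_nat_gt ((S (xM, w + ρ) + S (w, xM + ρ) - 2 * g xM) / (g xM - g w))
    have h1 := keyN M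
    have hε : 0 < g xM - g w := by linarith
    rw [div_lt_iff₀ hε] at hM
    rw [mul_sub] at hM
    rw [add_mul] at h1
    linarith
  exact le_antisymm ((hxM x).trans (key x')) ((hxM x').trans (key x))


end
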